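/- Let f : ℝ → ℝ be convex. Then the map A ↦ tr f(A) on d × d self-adjoint matrices is convex; in particular, for any self-adjoint A, B: tr f((A+B)/2) ≤ (tr f(A) + tr f(B))/2. -/

import Mathlib

open Matrix

/-- The trace of `f(A)` for a Hermitian matrix `A`, defined spectrally as the
sum of `f` over the eigenvalues of `A`. -/
noncomputable def trFun {d : ℕ} (f : ℝ → ℝ) {A : Matrix (Fin d) (Fin d) ℂ}
    (hA : A.IsHermitian) : ℝ :=
  ∑ i, f (hA.eigenvalues i)
lemma diag_conj_diagonal {d : ℕ} (W : Matrix (Fin d) (Fin d) ℂ) (g : Fin d → ℝ)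
    (i : Fin d) :
    Complex.re ((star W * diagonal (fun j => (g j : ℂ)) * W) i i)
      = ∑ k, Complex.normSq (W k i) * g k := by
  have h : (star W * diagonal (fun j => (g j : ℂ)) * W) i i
      = ∑ k, (starRingEnd ℂ) (W k i) * (g k : ℂ) * W k i := by
    simp [Matrix.mul_apply, Matrix.diagonal_apply, star_apply, Finset.sum_mul, ite_mul, zero_mul]
  rw [h, Complex.re_sum]
  congr 1
  ext k
  have h2 : (starRingEnd ℂ) (W k i) * (g k : ℂ) * W k i
      = ((Complex.normSq (W k i) * g k : ℝ) : ℂ) := by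
    push_cast
    rw [Complex.normSq_eq_conj_mul_self]
    ring
  rw [h2, Complex.ofReal_re]

lemma peierls {d : ℕ} (f : ℝ → ℝ) (hf : ConvexOn ℝ Set.univ f)
    {A : Matrix (Fin d) (Fin d) ℂ} (hA : A.IsHermitian)
    (V : Matrix.unitaryGroup (Fin d) ℂ) :
    ∑ i, f (Complex.re ((star (V : Matrix (Fin d) (Fin d) ℂ) * A * V) i i))
      ≤ ∑ j, f (hA.eigenvalues j) := by
  set W : Matrix.unitaryGroup (Fin d) ℂ := (star hA.eigenvectorUnitary) * V with hWdef
  have hWmat : (W : Matrix (Fin d) (Fin d) ℂ)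
      = star (hA.eigenvectorUnitary : Matrix (Fin d) (Fin d) ℂ) * (V : Matrix (Fin d) (Fin d) ℂ) := rfl
  have hVAV : star (V : Matrix (Fin d) (Fin d) ℂ) * A * (V : Matrix (Fin d) (Fin d) ℂ)
      = star (W : Matrix (Fin d) (Fin d) ℂ) *
          diagonal (fun j => (hA.eigenvalues j : ℂ)) * (W : Matrix (Fin d) (Fin d) ℂ) := by
    rw [hWmat, StarMul.star_mul, star_star]
    conv_lhs => rw [hA.spectral_theorem]
    show _ = _ * diagonal (RCLike.ofReal ∘ hA.eigenvalues) * _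
    rw [Unitary.conjStarAlgAut_apply]
    noncomm_ring
  have hcol : ∀ i, ∑ k, Complex.normSq ((W : Matrix (Fin d) (Fin d) ℂ) k i) = 1 := by
    intro i
    have h1 : (star (W : Matrix (Fin d) (Fin d) ℂ) * W) i i = 1 := by
      rw [(Matrix.mem_unitaryGroup_iff'.mp W.2 : star (W : Matrix (Fin d) (Fin d) ℂ) * W = 1)]
      simp
    have h2 : (star (W : Matrix (Fin d) (Fin d) ℂ) * W) i i
        = ∑ k, ((Complex.normSq ((W : Matrix (Fin d) (Fin d) ℂ) k i) : ℝ) : ℂ) := by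
      simp only [Matrix.mul_apply, star_apply]
      congr 1; ext k
      rw [Complex.normSq_eq_conj_mul_self, Complex.star_def]
    have h3 := h2.symm.trans h1
    have h4 : ((∑ k, Complex.normSq ((W : Matrix (Fin d) (Fin d) ℂ) k i) : ℝ) : ℂ) = 1 := by
      push_cast; rw [h3]
    exact_mod_cast h4
  have hrow : ∀ k, ∑ i, Complex.normSq ((W : Matrix (Fin d) (Fin d) ℂ) k i) = 1 := by
    intro k
    have h1 : ((W : Matrix (Fin d) (Fin d) ℂ) * star (W : Matrix (Fin d) (Fin d) ℂ)) k k = 1 := by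
      rw [(Matrix.mem_unitaryGroup_iff.mp W.2 :
        (W : Matrix (Fin d) (Fin d) ℂ) * star (W : Matrix (Fin d) (Fin d) ℂ) = 1)]
      simp
    have h2 : ((W : Matrix (Fin d) (Fin d) ℂ) * star (W : Matrix (Fin d) (Fin d) ℂ)) k k
        = ∑ i, ((Complex.normSq ((W : Matrix (Fin d) (Fin d) ℂ) k i) : ℝ) : ℂ) := by
      simp only [Matrix.mul_apply, star_apply]
      congr 1; ext i
      rw [Complex.normSq_eq_conj_mul_self, Complex.star_def]
      ring
    have h3 := h2.symm.trans h1
    have h4 : ((∑ i, Complex.normSq ((W : Matrix (Fin d) (Fin d) ℂ) k i) : ℝ) : ℂ) = 1 := by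
      push_cast; rw [h3]
    exact_mod_cast h4
  calc ∑ i, f (Complex.re ((star (V : Matrix (Fin d) (Fin d) ℂ) * A * V) i i))
      = ∑ i, f (∑ k, Complex.normSq ((W : Matrix (Fin d) (Fin d) ℂ) k i) * hA.eigenvalues k) := by
        congr 1; ext i
        rw [hVAV, diag_conj_diagonal]
    _ ≤ ∑ i, ∑ k, Complex.normSq ((W : Matrix (Fin d) (Fin d) ℂ) k i) * f (hA.eigenvalues k) := by
        apply Finset.sum_le_sum
        intro i _
        have := hf.map_sum_le (t := Finset.univ)
          (w := fun k => Complex.normSq ((W : Matrix (Fin d) (Fin d) ℂ) k i))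
          (p := fun k => hA.eigenvalues k)
          (fun k _ => Complex.normSq_nonneg _) (hcol i) (fun k _ => Set.mem_univ _)
        simpa [smul_eq_mul] using this
    _ = ∑ k, (∑ i, Complex.normSq ((W : Matrix (Fin d) (Fin d) ℂ) k i)) * f (hA.eigenvalues k) := by
        rw [Finset.sum_comm]
        simp [Finset.sum_mul]
    _ = ∑ k, f (hA.eigenvalues k) := by
        congr 1; ext k; rw [hrow k, one_mul]

lemma trFun_congr {d : ℕ} (f : ℝ → ℝ) {A B : Matrix (Fin d) (Fin d) ℂ}
    (hA : A.IsHermitian) (hB : B.IsHermitian) (h : A = B) :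
    trFun f hA = trFun f hB := by
  subst h; rfl

theorem trace_convexity {d : ℕ} (f : ℝ → ℝ) (hf : ConvexOn ℝ Set.univ f) :
    (∀ (A B : Matrix (Fin d) (Fin d) ℂ) (hA : A.IsHermitian) (hB : B.IsHermitian)
      (t : ℝ) (ht0 : 0 ≤ t) (ht1 : t ≤ 1)
      (hC : (t • A + (1 - t) • B).IsHermitian),
        trFun f hC ≤ t * trFun f hA + (1 - t) * trFun f hB) ∧
    (∀ (A B : Matrix (Fin d) (Fin d) ℂ) (hA : A.IsHermitian) (hB : B.IsHermitian)
      (hM : ((1 / 2 : ℝ) • (A + B)).IsHermitian),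
        trFun f hM ≤ (trFun f hA + trFun f hB) / 2) := by
  have main : ∀ (A B : Matrix (Fin d) (Fin d) ℂ) (hA : A.IsHermitian) (hB : B.IsHermitian)
      (t : ℝ), 0 ≤ t → t ≤ 1 → ∀ (hC : (t • A + (1 - t) • B).IsHermitian),
        trFun f hC ≤ t * trFun f hA + (1 - t) * trFun f hB := by
    intro A B hA hB t ht0 ht1 hC
    set C := t • A + (1 - t) • B with hCdef
    set V := hC.eigenvectorUnitary with hVdef
    have hsV : star (V : Matrix (Fin d) (Fin d) ℂ) * (V : Matrix (Fin d) (Fin d) ℂ) = 1 :=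
      Matrix.mem_unitaryGroup_iff'.mp V.2
    have hdiag : star (V : Matrix (Fin d) (Fin d) ℂ) * C * (V : Matrix (Fin d) (Fin d) ℂ)
        = diagonal (fun j => (hC.eigenvalues j : ℂ)) := by
      conv_lhs => rw [hC.spectral_theorem]
      show star (V : Matrix (Fin d) (Fin d) ℂ) *
          ((V : Matrix (Fin d) (Fin d) ℂ) * diagonal (RCLike.ofReal ∘ hC.eigenvalues) *
            star (V : Matrix (Fin d) (Fin d) ℂ)) * (V : Matrix (Fin d) (Fin d) ℂ) = _
      rw [show star (V : Matrix (Fin d) (Fin d) ℂ) *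
          ((V : Matrix (Fin d) (Fin d) ℂ) * diagonal (RCLike.ofReal ∘ hC.eigenvalues) *
            star (V : Matrix (Fin d) (Fin d) ℂ)) * (V : Matrix (Fin d) (Fin d) ℂ)
          = (star (V : Matrix (Fin d) (Fin d) ℂ) * (V : Matrix (Fin d) (Fin d) ℂ)) *
              diagonal (RCLike.ofReal ∘ hC.eigenvalues) *
              (star (V : Matrix (Fin d) (Fin d) ℂ) * (V : Matrix (Fin d) (Fin d) ℂ)) by
        noncomm_ring]
      rw [hsV, Matrix.one_mul, Matrix.mul_one]
      rfl
    have heig : ∀ i, hC.eigenvalues i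
        = t * Complex.re ((star (V : Matrix (Fin d) (Fin d) ℂ) * A * V) i i)
          + (1 - t) * Complex.re ((star (V : Matrix (Fin d) (Fin d) ℂ) * B * V) i i) := by
      intro i
      have h1 : ((hC.eigenvalues i : ℂ))
          = (star (V : Matrix (Fin d) (Fin d) ℂ) * C * (V : Matrix (Fin d) (Fin d) ℂ)) i i := by
        rw [hdiag]; simp
      have h2 : star (V : Matrix (Fin d) (Fin d) ℂ) * C * (V : Matrix (Fin d) (Fin d) ℂ)
          = t • (star (V : Matrix (Fin d) (Fin d) ℂ) * A * (V : Matrix (Fin d) (Fin d) ℂ))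
            + (1 - t) • (star (V : Matrix (Fin d) (Fin d) ℂ) * B * (V : Matrix (Fin d) (Fin d) ℂ)) := by
        rw [hCdef, Matrix.mul_add, Matrix.add_mul]
        congr 1 <;> rw [Matrix.mul_smul, Matrix.smul_mul]
      have h3 : hC.eigenvalues i = Complex.re
          ((star (V : Matrix (Fin d) (Fin d) ℂ) * C * (V : Matrix (Fin d) (Fin d) ℂ)) i i) := by
        rw [← h1, Complex.ofReal_re]
      rw [h3, h2]
      simp [Complex.smul_re]
    calc trFun f hC = ∑ i, f (hC.eigenvalues i) := rfl
      _ ≤ ∑ i, (t * f (Complex.re ((star (V : Matrix (Fin d) (Fin d) ℂ) * A * V) i i))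
            + (1 - t) * f (Complex.re ((star (V : Matrix (Fin d) (Fin d) ℂ) * B * V) i i))) := by
          apply Finset.sum_le_sum
          intro i _
          rw [heig i]
          have := hf.2 (Set.mem_univ (Complex.re ((star (V : Matrix (Fin d) (Fin d) ℂ) * A * V) i i)))
            (Set.mem_univ (Complex.re ((star (V : Matrix (Fin d) (Fin d) ℂ) * B * V) i i)))
            ht0 (sub_nonneg.mpr ht1 : (0:ℝ) ≤ 1 - t) (by ring)
          simpa [smul_eq_mul] using this
      _ = t * ∑ i, f (Complex.re ((star (V : Matrix (Fin d) (Fin d) ℂ) * A * V) i i))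
            + (1 - t) * ∑ i, f (Complex.re ((star (V : Matrix (Fin d) (Fin d) ℂ) * B * V) i i)) := by
          rw [Finset.sum_add_distrib, Finset.mul_sum, Finset.mul_sum]
      _ ≤ t * trFun f hA + (1 - t) * trFun f hB := by
          have h1 := peierls f hf hA V
          have h2 := peierls f hf hB V
          have ht1' : 0 ≤ 1 - t := by linarith
          unfold trFun
          gcongr
  refine ⟨fun A B hA hB t ht0 ht1 hC => main A B hA hB t ht0 ht1 hC, ?_⟩
  intro A B hA hB hM
  have hEq : (1 / 2 : ℝ) • (A + B) = (1 / 2 : ℝ) • A + (1 - 1 / 2 : ℝ) • B := by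
    rw [smul_add]; norm_num
  have hC : ((1 / 2 : ℝ) • A + (1 - 1 / 2 : ℝ) • B).IsHermitian := hEq ▸ hM
  have h := main A B hA hB (1 / 2) (by norm_num) (by norm_num) hC
  have heq := trFun_congr f hM hC hEq
  rw [heq]
  linarith [h]
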